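/- Let X and Y be real Banach spaces, x₀ ∈ X and r > 0. Let f : B(x₀, r) → Y be an isometry and let y₁ be an interior point of the image f(B(x₀, r)). Then there exists r₁ > 0 such that, with x₁ the (unique) point of B(x₀, r) with f(x₁) = y₁, one has B(x₁, r₁) ⊂ B(x₀, r) and f(B(x₁, r₁)) = B(y₁, r₁). -/

import Mathlib

/-- If `y₁` is an interior point of the image of a ball under an isometry `f`,
then `f` maps a small ball around the (unique) preimage `x₁` of `y₁` exactly
onto the ball of the same radius around `y₁`. -/
theorem isometry_image_interior_point_ball
    {X Y : Type*} [NormedAddCommGroup X] [NormedSpace ℝ X] [CompleteSpace X]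
    [NormedAddCommGroup Y] [NormedSpace ℝ Y] [CompleteSpace Y]
    (x₀ : X) (r : ℝ) (hr : 0 < r) (f : X → Y)
    (hf : ∀ x₁ ∈ Metric.closedBall x₀ r, ∀ x₂ ∈ Metric.closedBall x₀ r,
      ‖f x₁ - f x₂‖ = ‖x₁ - x₂‖)
    (y₁ : Y) (hy₁ : y₁ ∈ interior (f '' Metric.closedBall x₀ r)) :
    ∃ x₁ ∈ Metric.closedBall x₀ r, f x₁ = y₁ ∧ ∃ r₁ > 0,
      Metric.closedBall x₁ r₁ ⊆ Metric.closedBall x₀ r ∧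
      f '' Metric.closedBall x₁ r₁ = Metric.closedBall y₁ r₁ := by
  obtain ⟨ε, hε, hball⟩ := Metric.isOpen_iff.mp isOpen_interior y₁ hy₁
  replace hball : Metric.ball y₁ ε ⊆ f '' Metric.closedBall x₀ r :=
    hball.trans interior_subset
  have hsub : Metric.closedBall y₁ (ε / 2) ⊆ f '' Metric.closedBall x₀ r := by
    intro y hy
    exact hball (lt_of_le_of_lt (Metric.mem_closedBall.mp hy) (by linarith))
  have hy₁mem : y₁ ∈ f '' Metric.closedBall x₀ r :=
    hsub (Metric.mem_closedBall_self (by linarith))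
  obtain ⟨x₁, hx₁, hfx₁⟩ := hy₁mem
  set r₁ : ℝ := min (ε / 2) r with hr₁def
  have hr₁pos : 0 < r₁ := lt_min (by linarith) hr
  have hr₁ε : r₁ ≤ ε / 2 := min_le_left _ _
  have hr₁r : r₁ ≤ r := min_le_right _ _
  have hx₀mem : x₀ ∈ Metric.closedBall x₀ r := Metric.mem_closedBall_self hr.le
  -- key estimate: ‖x₁ - x₀‖ + r₁ ≤ r
  have hkey : ‖x₁ - x₀‖ + r₁ ≤ r := by
    set d : ℝ := ‖x₁ - x₀‖ with hd
    rcases eq_or_lt_of_le (norm_nonneg (x₁ - x₀)) with h0 | hdpos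
    · rw [hd, ← h0]; linarith
    · set z : Y := f x₀ - y₁ with hz
      have hznorm : ‖z‖ = d := by
        rw [hz, ← hfx₁, hf x₀ hx₀mem x₁ hx₁, hd, norm_sub_rev]
      set y : Y := y₁ - (r₁ / d) • z with hy
      have hyd : ‖y - y₁‖ = r₁ := by
        rw [hy]
        simp only [sub_sub_cancel_left, norm_neg, norm_smul, Real.norm_eq_abs,
          abs_of_pos (div_pos hr₁pos hdpos), hznorm]
        field_simp
        have hd0 : d ≠ 0 := ne_of_gt hdpos
        rw [abs_of_pos (show 0 < r₁ / d from div_pos hr₁pos hdpos)]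
        field_simp
      have hymem : y ∈ Metric.closedBall y₁ (ε / 2) := by
        rw [Metric.mem_closedBall, dist_eq_norm, hyd]; exact hr₁ε
      obtain ⟨x, hx, hfx⟩ := hsub hymem
      have h1 : ‖x - x₀‖ = d + r₁ := by
        rw [← hf x hx x₀ hx₀mem, hfx, hy, hz]
        have : y₁ - (r₁ / d) • (f x₀ - y₁) - f x₀ = -((1 + r₁ / d) • (f x₀ - y₁)) := by
          rw [add_smul, one_smul]; abel
        rw [this, norm_neg, norm_smul, Real.norm_eq_abs,
          abs_of_pos (by positivity : (0:ℝ) < 1 + r₁ / d)]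
        rw [show f x₀ - y₁ = z from rfl, hznorm]
        field_simp
        have hd0 : d ≠ 0 := ne_of_gt hdpos
        field_simp
      have h2 : ‖x - x₀‖ ≤ r := by
        rw [← dist_eq_norm]; exact hx
      linarith
  refine ⟨x₁, hx₁, hfx₁, r₁, hr₁pos, ?_, ?_⟩
  · intro x hx
    rw [Metric.mem_closedBall] at hx ⊢
    calc dist x x₀ ≤ dist x x₁ + dist x₁ x₀ := dist_triangle _ _ _
      _ ≤ r₁ + ‖x₁ - x₀‖ := by rw [dist_eq_norm x₁ x₀]; linarith
      _ ≤ r := by linarith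
  · have hsubball : Metric.closedBall x₁ r₁ ⊆ Metric.closedBall x₀ r := by
      intro x hx
      rw [Metric.mem_closedBall] at hx ⊢
      calc dist x x₀ ≤ dist x x₁ + dist x₁ x₀ := dist_triangle _ _ _
        _ ≤ r₁ + ‖x₁ - x₀‖ := by rw [dist_eq_norm x₁ x₀]; linarith
        _ ≤ r := by linarith
    ext y
    constructor
    · rintro ⟨x, hx, rfl⟩
      rw [Metric.mem_closedBall, dist_eq_norm, ← hfx₁, hf x (hsubball hx) x₁ hx₁,
        ← dist_eq_norm]
      exact hx
    · intro hy
      have hy' : y ∈ Metric.closedBall y₁ (ε / 2) :=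
        Metric.closedBall_subset_closedBall hr₁ε hy
      obtain ⟨x, hx, hfx⟩ := hsub hy'
      refine ⟨x, ?_, hfx⟩
      rw [Metric.mem_closedBall, dist_eq_norm, ← hf x hx x₁ hx₁, hfx, hfx₁,
        ← dist_eq_norm]
      exact hy
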